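/- Let 𝔏 be a subspace lattice in a Banach space X. For a closed subspace K of X, the following are equivalent: (a) K is invariant under every rank-one operator in Alg(𝔏); (b) for every M ∈ 𝔏, either M ⊆ K or K ⊆ M₋; (c) there exists N ∈ 𝔏 with N ⊆ K ⊆ N₊ := ⋀{M₋ : M ∈ 𝔏, M ⊄ N}. -/

import Mathlib

open ContinuousLinearMap

/-- The closed linear span (join) of a family of subspaces. -/
noncomputable def cJoin {X : Type*} [NormedAddCommGroup X] [NormedSpace ℂ X]
    (S : Set (Submodule ℂ X)) : Submodule ℂ X :=
  (sSup S).topologicalClosure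

/-- Join of two subspaces in the lattice of closed subspaces. -/
noncomputable def cJoin2 {X : Type*} [NormedAddCommGroup X] [NormedSpace ℂ X]
    (M N : Submodule ℂ X) : Submodule ℂ X :=
  (M ⊔ N).topologicalClosure

/-- A subspace lattice: a complete lattice of closed subspaces containing the trivial ones. -/
def IsSubspaceLattice {X : Type*} [NormedAddCommGroup X] [NormedSpace ℂ X]
    (L : Set (Submodule ℂ X)) : Prop :=
  (∀ M ∈ L, IsClosed (M : Set X)) ∧ ⊥ ∈ L ∧ ⊤ ∈ L ∧
    ∀ S ⊆ L, cJoin S ∈ L ∧ sInf S ∈ L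

/-- Alg(F): bounded operators leaving every member of F invariant. -/
def algOf {X : Type*} [NormedAddCommGroup X] [NormedSpace ℂ X]
    (L : Set (Submodule ℂ X)) : Set (X →L[ℂ] X) :=
  {A | ∀ M ∈ L, ∀ x ∈ M, A x ∈ M}

/-- Lat(T): closed subspaces invariant under every operator in T. -/
def latOf {X : Type*} [NormedAddCommGroup X] [NormedSpace ℂ X]
    (T : Set (X →L[ℂ] X)) : Set (Submodule ℂ X) :=
  {M | IsClosed (M : Set X) ∧ ∀ A ∈ T, ∀ x ∈ M, A x ∈ M}

/-- The rank-one operator e ⊗ η : x ↦ η(x) • e. -/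
noncomputable def rankOne {X : Type*} [NormedAddCommGroup X] [NormedSpace ℂ X]
    (e : X) (η : X →L[ℂ] ℂ) : X →L[ℂ] X :=
  η.smulRight e

/-- The rank-one operators in a set of operators. -/
noncomputable def Rk1 {X : Type*} [NormedAddCommGroup X] [NormedSpace ℂ X]
    (T : Set (X →L[ℂ] X)) : Set (X →L[ℂ] X) :=
  {A ∈ T | ∃ (e : X) (η : X →L[ℂ] ℂ), e ≠ 0 ∧ η ≠ 0 ∧ A = rankOne e η}

/-- M₋ = ⋁{K ∈ L : M ⊄ K}. -/
noncomputable def mMinus {X : Type*} [NormedAddCommGroup X] [NormedSpace ℂ X]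
    (L : Set (Submodule ℂ X)) (M : Submodule ℂ X) : Submodule ℂ X :=
  cJoin {K | K ∈ L ∧ ¬ M ≤ K}

/-- M₊ = ⋀{K ∈ L : K ⊄ M}. -/
noncomputable def mPlus {X : Type*} [NormedAddCommGroup X] [NormedSpace ℂ X]
    (L : Set (Submodule ℂ X)) (M : Submodule ℂ X) : Submodule ℂ X :=
  sInf {K | K ∈ L ∧ ¬ K ≤ M}

/-- N_* = ⋀{M₋ : M ∈ L, M ⊄ N}. -/
noncomputable def nStar {X : Type*} [NormedAddCommGroup X] [NormedSpace ℂ X]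
    (L : Set (Submodule ℂ X)) (N : Submodule ℂ X) : Submodule ℂ X :=
  sInf {P | ∃ M, M ∈ L ∧ ¬ M ≤ N ∧ P = mMinus L M}

/-- The cyclic subspace [Alg(L)x]: closed linear span of the orbit of x under Alg(L). -/
noncomputable def cyclicSubspace {X : Type*} [NormedAddCommGroup X] [NormedSpace ℂ X]
    (L : Set (Submodule ℂ X)) (x : X) : Submodule ℂ X :=
  (Submodule.span ℂ ((fun A : X →L[ℂ] X => A x) '' algOf L)).topologicalClosure

/-- The pinch points of a family of subspaces. -/
def pinOf {X : Type*} [NormedAddCommGroup X] [NormedSpace ℂ X]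
    (L : Set (Submodule ℂ X)) : Set (Submodule ℂ X) :=
  {P | P ∈ L ∧ ∀ M ∈ L, M ≤ P ∨ P ≤ M}


/-- Hahn–Banach: a point outside a closed subspace is separated from it by a
continuous functional vanishing on the subspace. -/
lemma exists_functional_of_not_mem {X : Type*} [NormedAddCommGroup X] [NormedSpace ℂ X]
    {S : Submodule ℂ X} (hS : IsClosed (S : Set X)) {x : X} (hx : x ∉ S) :
    ∃ η : X →L[ℂ] ℂ, (∀ y ∈ S, η y = 0) ∧ η x ≠ 0 := by
  haveI := hS
  let π : X →L[ℂ] (X ⧸ S) :=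
    S.mkQ.mkContinuous 1 (fun y => by
      simpa using Submodule.Quotient.norm_mk_le S y)
  have hπ : ∀ y : X, π y = Submodule.Quotient.mk y := fun y => rfl
  have hπx : π x ≠ 0 := by
    rw [hπ]
    intro h
    exact hx ((Submodule.Quotient.mk_eq_zero S).1 h)
  obtain ⟨f, hf⟩ := SeparatingDual.exists_ne_zero (R := ℂ) hπx
  refine ⟨f.comp π, ?_, hf⟩
  intro y hy
  have : π y = 0 := by rw [hπ]; exact (Submodule.Quotient.mk_eq_zero S).2 hy
  simp [ContinuousLinearMap.comp_apply, this]

lemma le_cJoin {X : Type*} [NormedAddCommGroup X] [NormedSpace ℂ X]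
    {S : Set (Submodule ℂ X)} {M : Submodule ℂ X} (hM : M ∈ S) : M ≤ cJoin S :=
  (le_sSup hM).trans (Submodule.le_topologicalClosure _)

lemma cJoin_vanish {X : Type*} [NormedAddCommGroup X] [NormedSpace ℂ X]
    {S : Set (Submodule ℂ X)} {η : X →L[ℂ] ℂ}
    (h : ∀ M ∈ S, ∀ x ∈ M, η x = 0) : ∀ x ∈ cJoin S, η x = 0 := by
  have hle : cJoin S ≤ LinearMap.ker (η : X →ₗ[ℂ] ℂ) := by
    refine Submodule.topologicalClosure_minimal _ (sSup_le fun M hM => ?_) (ContinuousLinearMap.isClosed_ker η)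
    intro x hx
    exact LinearMap.mem_ker.2 (h M hM x hx)
  exact fun x hx => LinearMap.mem_ker.1 (hle hx)

/-- Characterization of the closed subspaces invariant under all rank-one operators of Alg(𝔏). -/
theorem mem_lat_rankOne_iff
    {X : Type*} [NormedAddCommGroup X] [NormedSpace ℂ X] [CompleteSpace X]
    (L : Set (Submodule ℂ X)) (hL : IsSubspaceLattice L)
    (K : Submodule ℂ X) (hK : IsClosed (K : Set X)) :
    (K ∈ latOf (Rk1 (algOf L)) ↔ ∀ M ∈ L, M ≤ K ∨ K ≤ mMinus L M) ∧
    (K ∈ latOf (Rk1 (algOf L)) ↔ ∃ N ∈ L, N ≤ K ∧ K ≤ nStar L N) := by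
  -- (a) → (b)
  have hb_of_a : K ∈ latOf (Rk1 (algOf L)) → ∀ M ∈ L, M ≤ K ∨ K ≤ mMinus L M := by
    intro hKlat M hM
    by_contra hcon
    push_neg at hcon
    obtain ⟨hMK, hKm⟩ := hcon
    obtain ⟨e, heM, heK⟩ := SetLike.not_le_iff_exists.1 hMK
    obtain ⟨x₀, hx₀K, hx₀m⟩ := SetLike.not_le_iff_exists.1 hKm
    have hclosed : IsClosed ((mMinus L M : Submodule ℂ X) : Set X) :=
      Submodule.isClosed_topologicalClosure _
    obtain ⟨η, hη0, hηx⟩ := exists_functional_of_not_mem hclosed hx₀m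
    have he0 : e ≠ 0 := fun h => heK (h ▸ K.zero_mem)
    have hηne : η ≠ 0 := fun h => hηx (by simp [h])
    have hA : rankOne e η ∈ algOf L := by
      intro M' hM' x hx
      show η x • e ∈ M'
      by_cases hMM' : M ≤ M'
      · exact M'.smul_mem _ (hMM' heM)
      · have hxm : x ∈ mMinus L M := le_cJoin (show M' ∈ {K | K ∈ L ∧ ¬ M ≤ K} from ⟨hM', hMM'⟩) hx
        rw [hη0 x hxm, zero_smul]
        exact M'.zero_mem
    have hmem : rankOne e η x₀ ∈ K :=
      hKlat.2 (rankOne e η) (show rankOne e η ∈ Rk1 (algOf L) from ⟨hA, e, η, he0, hηne, rfl⟩) x₀ hx₀K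
    have hmem' : η x₀ • e ∈ K := hmem
    have : e ∈ K := by
      have h2 := K.smul_mem (η x₀)⁻¹ hmem'
      rwa [smul_smul, inv_mul_cancel₀ hηx, one_smul] at h2
    exact heK this
  -- (b) → (a)
  have ha_of_b : (∀ M ∈ L, M ≤ K ∨ K ≤ mMinus L M) → K ∈ latOf (Rk1 (algOf L)) := by
    intro hb
    refine ⟨hK, ?_⟩
    rintro A ⟨hA, e, η, he0, hηne, rfl⟩ x hx
    show η x • e ∈ K
    set N := sInf {M | M ∈ L ∧ e ∈ M} with hN
    have hNL : N ∈ L := (hL.2.2.2 _ (fun M hM => hM.1)).2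
    have heN : e ∈ N := Submodule.mem_sInf.2 fun M hM => hM.2
    have hker : ∀ y ∈ mMinus L N, η y = 0 := by
      refine cJoin_vanish ?_
      rintro M' ⟨hM', hNM'⟩ y hy
      by_contra hηy
      have hmem : η y • e ∈ M' := hA M' hM' y hy
      have heM' : e ∈ M' := by
        have h2 := M'.smul_mem (η y)⁻¹ hmem
        rwa [smul_smul, inv_mul_cancel₀ hηy, one_smul] at h2
      exact hNM' (sInf_le ⟨hM', heM'⟩)
    rcases hb N hNL with h | h
    · exact K.smul_mem _ (h heN)
    · rw [hker x (h hx), zero_smul]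
      exact K.zero_mem
  have hab : K ∈ latOf (Rk1 (algOf L)) ↔ ∀ M ∈ L, M ≤ K ∨ K ≤ mMinus L M :=
    ⟨hb_of_a, ha_of_b⟩
  -- (b) ↔ (c)
  have hbc : (∀ M ∈ L, M ≤ K ∨ K ≤ mMinus L M) ↔ ∃ N ∈ L, N ≤ K ∧ K ≤ nStar L N := by
    constructor
    · intro hb
      refine ⟨cJoin {M | M ∈ L ∧ M ≤ K}, (hL.2.2.2 _ (fun M hM => hM.1)).1, ?_, ?_⟩
      · exact Submodule.topologicalClosure_minimal _ (sSup_le fun M hM => hM.2) hK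
      · refine le_sInf ?_
        rintro P ⟨M, hM, hMN, rfl⟩
        have hMK : ¬ M ≤ K := fun h => hMN (le_cJoin (show M ∈ {M | M ∈ L ∧ M ≤ K} from ⟨hM, h⟩))
        rcases hb M hM with h | h
        · exact absurd h hMK
        · exact h
    · rintro ⟨N, hNL, hNK, hKN⟩ M hM
      by_cases h : M ≤ N
      · exact Or.inl (h.trans hNK)
      · exact Or.inr (hKN.trans (sInf_le ⟨M, hM, h, rfl⟩))
  exact ⟨hab, hab.trans hbc⟩
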